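/- A = B ∩ P implies Q: if an invertible element T of a Clifford algebra satisfies both reverse(T)·T ∈ Z^× and involute(reverse(T))·T ∈ Z^×, then T ∈ Z^×(C^{×(0)} ∪ C^{×(1)}); i.e. A ∩ B = Q. -/

import Mathlib

open CliffordAlgebra

noncomputable section

variable {n : ℕ} (Q : QuadraticForm ℝ (Fin n → ℝ))

/-- The standard generators `e_a` of the Clifford algebra. -/
def egen (a : Fin n) : CliffordAlgebra Q := ι Q (Pi.single a 1)

/-- The ordered product of generators indexed by a finite set. -/
def eProd (s : Finset (Fin n)) : CliffordAlgebra Q :=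
  ((s.sort (· ≤ ·)).map (egen Q)).prod

/-- The grade-`k` subspace `C^k`, spanned by the products of `k` distinct generators. -/
def gradeSubmodule (k : ℕ) : Submodule ℝ (CliffordAlgebra Q) :=
  Submodule.span ℝ {x | ∃ s : Finset (Fin n), s.card = k ∧ x = eProd Q s}

/-- The set `Z^× (C^{×(0)} ∪ C^{×(1)})` : invertible central elements times
invertible even or odd elements. -/
def Pset : Set (CliffordAlgebra Q) :=
  {T | ∃ W T₀ : CliffordAlgebra Q,
    W ∈ Subalgebra.center ℝ (CliffordAlgebra Q) ∧ IsUnit W ∧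
    (T₀ ∈ evenOdd Q 0 ∨ T₀ ∈ evenOdd Q 1) ∧ IsUnit T₀ ∧ T = W * T₀}

/-- `Q` is diagonal with entries `±1` in the standard basis (an orthonormal-type basis,
expressing nondegeneracy of `Q`). -/
def DiagQ : Prop :=
  (∀ a, Q (Pi.single a 1) = 1 ∨ Q (Pi.single a 1) = -1) ∧
  (∀ a b : Fin n, a ≠ b → QuadraticMap.polar Q (Pi.single a 1) (Pi.single b 1) = 0)

namespace Stmt12Aux

def wprod (l : List (Fin n)) : CliffordAlgebra Q := (l.map (egen Q)).prod

@[simp] lemma wprod_nil : wprod Q ([] : List (Fin n)) = 1 := rfl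

lemma wprod_cons (a : Fin n) (l : List (Fin n)) :
    wprod Q (a :: l) = egen Q a * wprod Q l := by simp [wprod]

lemma wprod_append (l₁ l₂ : List (Fin n)) :
    wprod Q (l₁ ++ l₂) = wprod Q l₁ * wprod Q l₂ := by simp [wprod]

variable {Q}

lemma egen_sq (a : Fin n) :
    egen Q a * egen Q a = algebraMap ℝ _ (Q (Pi.single a 1)) := ι_sq_scalar Q _

lemma q_mul_q (hQ : DiagQ Q) (a : Fin n) :
    Q (Pi.single a 1) * Q (Pi.single a 1) = 1 := by
  rcases hQ.1 a with h | h <;> rw [h] <;> norm_num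

lemma neg_one_pow_sq (k : ℕ) : ((-1 : ℝ) ^ k) * ((-1 : ℝ) ^ k) = 1 := by
  rw [← pow_add]
  exact Even.neg_one_pow ⟨k, rfl⟩

lemma egen_anticomm (hQ : DiagQ Q) {a b : Fin n} (h : b ≠ a) :
    egen Q a * egen Q b = -(egen Q b * egen Q a) := by
  have h2 := ι_mul_ι_add_swap (Q := Q) (Pi.single a 1) (Pi.single b 1)
  rw [hQ.2 a b (Ne.symm h), map_zero] at h2
  exact eq_neg_of_add_eq_zero_left h2

lemma egen_comm_wprod (hQ : DiagQ Q) (a : Fin n) :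
    ∀ l : List (Fin n), egen Q a * wprod Q l
      = ((-1 : ℝ) ^ (l.length + l.count a)) • (wprod Q l * egen Q a)
  | [] => by simp
  | b :: l => by
    have IH := egen_comm_wprod hQ a l
    rcases eq_or_ne b a with rfl | hba
    · -- b = a
      have hcnt : (b :: l).count b = l.count b + 1 := by simp [List.count_cons]
      rw [hcnt, wprod_cons]
      have hexp : (b :: l).length + (l.count b + 1) = (l.length + l.count b) + 2 := by
        simp [List.length_cons]; ring
      rw [hexp, pow_add]
      have : ((-1 : ℝ) ^ 2) = 1 := by norm_num
      rw [this, mul_one]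
      rw [mul_assoc, IH, mul_smul_comm]
    · -- b ≠ a
      have hcnt : (b :: l).count a = l.count a := by
        simp [List.count_cons, hba.symm, hba]
      have hexp : (b :: l).length + l.count a = (l.length + l.count a) + 1 := by
        simp [List.length_cons]; omega
      rw [hcnt, wprod_cons, ← mul_assoc, egen_anticomm hQ hba, neg_mul, mul_assoc, IH,
        mul_smul_comm, hexp, pow_succ, mul_neg_one, neg_smul, neg_inj, mul_assoc]

lemma involute_wprod : ∀ l : List (Fin n),
    involute (wprod Q l) = ((-1 : ℝ) ^ l.length) • wprod Q l
  | [] => by simp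
  | a :: l => by
    rw [wprod_cons, map_mul, involute_wprod l]
    have : involute (egen Q a) = -egen Q a := involute_ι _
    rw [this, List.length_cons, pow_succ, mul_neg_one, neg_smul, neg_mul, mul_smul_comm]

lemma wprod_scalar (hQ : DiagQ Q) :
    ∀ (N : ℕ) (l : List (Fin n)), l.length ≤ N → (∀ a, Even (l.count a)) →
      ∃ r : ℝ, wprod Q l = algebraMap ℝ _ r := by
  intro N
  induction N with
  | zero =>
    intro l hl _
    have : l = [] := List.length_eq_zero_iff.mp (Nat.le_zero.mp hl)
    exact ⟨1, by simp [this]⟩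
  | succ N IH =>
    intro l hl hev
    match l with
    | [] => exact ⟨1, by simp⟩
    | a :: l' =>
      have hodd : ¬ Even (l'.count a) := by
        have := hev a
        rw [List.count_cons_self] at this
        rw [Nat.even_iff] at this ⊢
        omega
      have hmem : a ∈ l' := by
        by_contra hma
        exact hodd (by simp [List.count_eq_zero_of_not_mem hma])
      obtain ⟨s, t, rfl⟩ := List.append_of_mem hmem
      -- wprod (a :: (s ++ a :: t)) = ± q • wprod (s ++ t)
      have key : wprod Q (a :: (s ++ a :: t))
          = (((-1 : ℝ) ^ (s.length + s.count a)) * Q (Pi.single a 1)) • wprod Q (s ++ t) := by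
        rw [wprod_cons, wprod_append, wprod_cons, ← mul_assoc, egen_comm_wprod hQ a s,
          smul_mul_assoc, mul_assoc (wprod Q s), ← mul_assoc (egen Q a), egen_sq,
          ← Algebra.smul_def, mul_smul_comm, ← wprod_append, smul_smul]
      have hlen : (s ++ t).length ≤ N := by
        have := hl
        simp only [List.length_cons, List.length_append] at this ⊢
        omega
      have hev' : ∀ b, Even ((s ++ t).count b) := by
        intro b
        rcases eq_or_ne b a with rfl | hba
        · have h1 := hev b
          simp only [List.count_cons_self, List.count_append, List.count_cons_self] at h1
          simp only [List.count_append]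
          rw [Nat.even_iff] at h1 ⊢; omega
        · have h1 := hev b
          simp only [List.count_cons, List.count_append, if_neg hba.symm] at h1 ⊢
          rw [Nat.even_iff] at h1 ⊢; omega
      obtain ⟨r, hr⟩ := IH (s ++ t) hlen hev'
      refine ⟨((-1 : ℝ) ^ (s.length + s.count a)) * Q (Pi.single a 1) * r, ?_⟩
      rw [key, hr, Algebra.smul_def, ← map_mul]

/-- The twisted conjugation operator `x ↦ q_a • (e_a * involute x * e_a)`. -/
def tauL (a : Fin n) : CliffordAlgebra Q →ₗ[ℝ] CliffordAlgebra Q :=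
  Q (Pi.single a 1) •
    ((LinearMap.mulLeft ℝ (egen Q a)).comp
      ((LinearMap.mulRight ℝ (egen Q a)).comp (involute (Q := Q)).toLinearMap))

lemma tauL_apply (a : Fin n) (x : CliffordAlgebra Q) :
    tauL a x = Q (Pi.single a 1) • (egen Q a * (involute x * egen Q a)) := rfl

lemma tauL_wprod (hQ : DiagQ Q) (a : Fin n) (l : List (Fin n)) :
    tauL a (wprod Q l) = ((-1 : ℝ) ^ l.count a) • wprod Q l := by
  rw [tauL_apply, involute_wprod, smul_mul_assoc, mul_smul_comm, ← mul_assoc,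
    egen_comm_wprod hQ a l, smul_mul_assoc, mul_assoc, egen_sq, ← Algebra.commutes,
    ← Algebra.smul_def, smul_smul, smul_smul, smul_smul]
  congr 1
  have h1 := neg_one_pow_sq l.length
  have h2 := q_mul_q hQ a
  rw [pow_add]
  linear_combination ((-1:ℝ) ^ l.count a) * (Q (Pi.single a 1)) * (Q (Pi.single a 1)) * h1
    + ((-1:ℝ) ^ l.count a) * h2

def rhoL (a : Fin n) : CliffordAlgebra Q →ₗ[ℝ] CliffordAlgebra Q :=
  (2⁻¹ : ℝ) • (LinearMap.id + tauL a)

lemma rhoL_apply (a : Fin n) (x : CliffordAlgebra Q) :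
    rhoL a x = (2⁻¹ : ℝ) • (x + tauL a x) := rfl

lemma rhoL_fix {a : Fin n} {Y : CliffordAlgebra Q} (h : tauL a Y = Y) : rhoL a Y = Y := by
  rw [rhoL_apply, h, ← two_smul ℝ Y, smul_smul]
  norm_num

def wspan (s : Finset (Fin n)) : Submodule ℝ (CliffordAlgebra Q) :=
  Submodule.span ℝ {x | ∃ l : List (Fin n), (∀ a ∈ s, Even (l.count a)) ∧ x = wprod Q l}

lemma wspan_empty : wspan (Q := Q) ∅ = ⊤ := by
  rw [eq_top_iff]
  rintro x -
  induction x using CliffordAlgebra.induction with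
  | algebraMap r =>
      rw [Algebra.algebraMap_eq_smul_one]
      exact Submodule.smul_mem _ _ (Submodule.subset_span ⟨[], by simp, rfl⟩)
  | ι v =>
      have : ι Q v = ∑ a : Fin n, v a • wprod Q [a] := by
        conv_lhs => rw [← Finset.univ_sum_single v]
        rw [map_sum]
        refine Finset.sum_congr rfl fun a _ => ?_
        have : (Pi.single a (v a) : Fin n → ℝ) = v a • (Pi.single a 1 : Fin n → ℝ) := by
          rw [← Pi.single_smul, smul_eq_mul, mul_one]
        rw [this, map_smul]
        simp [wprod, egen]
      rw [this]
      exact Submodule.sum_mem _ fun a _ =>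
        Submodule.smul_mem _ _ (Submodule.subset_span ⟨[a], by simp, rfl⟩)
  | mul x y hx hy =>
      simp only [wspan] at hx hy ⊢
      refine Submodule.span_induction₂
        (p := fun x y _ _ => x * y ∈ wspan (Q := Q) ∅) ?_ ?_ ?_ ?_ ?_ ?_ ?_ hx hy
      · rintro _ _ ⟨l₁, -, rfl⟩ ⟨l₂, -, rfl⟩
        exact Submodule.subset_span ⟨l₁ ++ l₂, by simp, (wprod_append Q l₁ l₂).symm⟩
      · intro y _; rw [zero_mul]; exact zero_mem _
      · intro x _; rw [mul_zero]; exact zero_mem _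
      · intro x y z _ _ _ h1 h2; rw [add_mul]; exact add_mem h1 h2
      · intro x y z _ _ _ h1 h2; rw [mul_add]; exact add_mem h1 h2
      · intro r x y _ _ h1; rw [smul_mul_assoc]; exact Submodule.smul_mem _ _ h1
      · intro r x y _ _ h1; rw [mul_smul_comm]; exact Submodule.smul_mem _ _ h1
  | add x y hx hy => exact add_mem hx hy

lemma rhoL_maps (hQ : DiagQ Q) (a : Fin n) (s : Finset (Fin n)) {x : CliffordAlgebra Q}
    (hx : x ∈ wspan (Q := Q) s) : rhoL a x ∈ wspan (Q := Q) (insert a s) := by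
  have hmem : rhoL a x ∈ Submodule.map (rhoL a) (wspan (Q := Q) s) :=
    Submodule.mem_map_of_mem hx
  rw [wspan, Submodule.map_span] at hmem
  refine Submodule.span_le.mpr ?_ hmem
  rintro _ ⟨_, ⟨l, hl, rfl⟩, rfl⟩
  rw [rhoL_apply, tauL_wprod hQ]
  rcases Nat.even_or_odd (l.count a) with he | ho
  · rw [he.neg_one_pow, one_smul, ← two_smul ℝ (wprod Q l), smul_smul,
      show (2⁻¹ : ℝ) * 2 = 1 by norm_num, one_smul]
    exact Submodule.subset_span ⟨l, fun b hb => by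
      rcases Finset.mem_insert.mp hb with rfl | hb
      · exact he
      · exact hl b hb, rfl⟩
  · rw [ho.neg_one_pow, neg_one_smul, add_neg_cancel, smul_zero]
    exact zero_mem _

lemma scalar_of_central_involute_fixed (hQ : DiagQ Q) {Y : CliffordAlgebra Q}
    (hc : Y ∈ Subalgebra.center ℝ (CliffordAlgebra Q)) (hi : involute Y = Y) :
    ∃ r : ℝ, Y = algebraMap ℝ (CliffordAlgebra Q) r := by
  have htau : ∀ a, tauL a Y = Y := by
    intro a
    have hcomm : egen Q a * Y = Y * egen Q a :=
      Subalgebra.mem_center_iff.mp hc _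
    rw [tauL_apply, hi, ← mul_assoc, hcomm, mul_assoc, egen_sq, ← Algebra.commutes,
      ← Algebra.smul_def, smul_smul, q_mul_q hQ a, one_smul]
  have hall : ∀ s : Finset (Fin n), Y ∈ wspan (Q := Q) s := by
    intro s
    induction s using Finset.induction_on with
    | empty => rw [wspan_empty]; trivial
    | insert _ _ ha ih => exact rhoL_fix (htau _) ▸ rhoL_maps hQ _ _ ih
  have hle : wspan (Q := Q) Finset.univ ≤ Submodule.span ℝ {(1 : CliffordAlgebra Q)} := by
    refine Submodule.span_le.mpr ?_
    rintro _ ⟨l, hl, rfl⟩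
    obtain ⟨r, hr⟩ := wprod_scalar hQ l.length l le_rfl (fun a => hl a (Finset.mem_univ a))
    rw [hr, Algebra.algebraMap_eq_smul_one]
    exact Submodule.smul_mem _ _ (Submodule.mem_span_singleton_self _)
  obtain ⟨r, hr⟩ := Submodule.mem_span_singleton.mp (hle (hall Finset.univ))
  exact ⟨r, by rw [← hr, Algebra.algebraMap_eq_smul_one]⟩
lemma involute_mem_center {z : CliffordAlgebra Q}
    (h : z ∈ Subalgebra.center ℝ (CliffordAlgebra Q)) :
    involute z ∈ Subalgebra.center ℝ (CliffordAlgebra Q) := by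
  rw [Subalgebra.mem_center_iff] at h ⊢
  intro x
  have := congrArg (involute (Q := Q)) (h (involute x))
  simpa only [map_mul, involute_involute] using this

lemma inv_mem_center {u : (CliffordAlgebra Q)ˣ}
    (h : (↑u : CliffordAlgebra Q) ∈ Subalgebra.center ℝ (CliffordAlgebra Q)) :
    (↑u⁻¹ : CliffordAlgebra Q) ∈ Subalgebra.center ℝ (CliffordAlgebra Q) := by
  rw [Subalgebra.mem_center_iff] at h ⊢
  intro x
  calc x * (↑u⁻¹ : CliffordAlgebra Q)
      = ↑u⁻¹ * (↑u * (x * ↑u⁻¹)) := (Units.inv_mul_cancel_left _ _).symm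
    _ = ↑u⁻¹ * (↑u * x * ↑u⁻¹) := by rw [mul_assoc (↑u : CliffordAlgebra Q)]
    _ = ↑u⁻¹ * (x * ↑u * ↑u⁻¹) := by rw [← h x]
    _ = ↑u⁻¹ * x := by rw [Units.mul_inv_cancel_right]

lemma decompose_two (x : CliffordAlgebra Q) :
    x = (DirectSum.decompose (evenOdd Q) x 0 : CliffordAlgebra Q)
      + (DirectSum.decompose (evenOdd Q) x 1 : CliffordAlgebra Q) := by
  classical
  conv_lhs => rw [← DirectSum.sum_support_decompose (evenOdd Q) x]
  rw [Finset.sum_subset (Finset.subset_univ _) (fun i _ hi => by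
    rw [DFinsupp.notMem_support_iff.mp hi, ZeroMemClass.coe_zero])]
  rw [show (Finset.univ : Finset (ZMod 2)) = {0, 1} by decide,
    Finset.sum_insert (by decide), Finset.sum_singleton]

lemma mem_even_of_involute_fixed {x : CliffordAlgebra Q} (h : involute x = x) :
    x ∈ evenOdd Q 0 := by
  have hd := decompose_two (Q := Q) x
  have h0 : involute ((DirectSum.decompose (evenOdd Q) x 0 : CliffordAlgebra Q))
      = (DirectSum.decompose (evenOdd Q) x 0 : CliffordAlgebra Q) :=
    involute_eq_of_mem_even (SetLike.coe_mem _)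
  have h1 : involute ((DirectSum.decompose (evenOdd Q) x 1 : CliffordAlgebra Q))
      = -(DirectSum.decompose (evenOdd Q) x 1 : CliffordAlgebra Q) :=
    involute_eq_of_mem_odd (SetLike.coe_mem _)
  have e1 : involute ((DirectSum.decompose (evenOdd Q) x 0 : CliffordAlgebra Q)
      + (DirectSum.decompose (evenOdd Q) x 1 : CliffordAlgebra Q))
      = (DirectSum.decompose (evenOdd Q) x 0 : CliffordAlgebra Q)
      + -(DirectSum.decompose (evenOdd Q) x 1 : CliffordAlgebra Q) := by
    rw [map_add, h0, h1]
  have heq : (DirectSum.decompose (evenOdd Q) x 0 : CliffordAlgebra Q)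
      + (DirectSum.decompose (evenOdd Q) x 1 : CliffordAlgebra Q)
      = (DirectSum.decompose (evenOdd Q) x 0 : CliffordAlgebra Q)
      + -(DirectSum.decompose (evenOdd Q) x 1 : CliffordAlgebra Q) := by
    rw [← e1, ← hd, h]
  have hcancel := add_left_cancel heq
  have hz : (DirectSum.decompose (evenOdd Q) x 1 : CliffordAlgebra Q) = 0 := by
    have h2 : (2 : ℝ) • (DirectSum.decompose (evenOdd Q) x 1 : CliffordAlgebra Q) = 0 := by
      rw [two_smul]
      nth_rewrite 2 [hcancel]
      exact add_neg_cancel _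
    rcases smul_eq_zero.mp h2 with h | h
    · norm_num at h
    · exact h
  rw [hd, hz, add_zero]
  exact SetLike.coe_mem _

lemma mem_odd_of_involute_neg {x : CliffordAlgebra Q} (h : involute x = -x) :
    x ∈ evenOdd Q 1 := by
  have hd := decompose_two (Q := Q) x
  have h0 : involute ((DirectSum.decompose (evenOdd Q) x 0 : CliffordAlgebra Q))
      = (DirectSum.decompose (evenOdd Q) x 0 : CliffordAlgebra Q) :=
    involute_eq_of_mem_even (SetLike.coe_mem _)
  have h1 : involute ((DirectSum.decompose (evenOdd Q) x 1 : CliffordAlgebra Q))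
      = -(DirectSum.decompose (evenOdd Q) x 1 : CliffordAlgebra Q) :=
    involute_eq_of_mem_odd (SetLike.coe_mem _)
  have e1 : involute ((DirectSum.decompose (evenOdd Q) x 0 : CliffordAlgebra Q)
      + (DirectSum.decompose (evenOdd Q) x 1 : CliffordAlgebra Q))
      = (DirectSum.decompose (evenOdd Q) x 0 : CliffordAlgebra Q)
      + -(DirectSum.decompose (evenOdd Q) x 1 : CliffordAlgebra Q) := by
    rw [map_add, h0, h1]
  have heq : (DirectSum.decompose (evenOdd Q) x 0 : CliffordAlgebra Q)
      + -(DirectSum.decompose (evenOdd Q) x 1 : CliffordAlgebra Q)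
      = -(DirectSum.decompose (evenOdd Q) x 0 : CliffordAlgebra Q)
      + -(DirectSum.decompose (evenOdd Q) x 1 : CliffordAlgebra Q) := by
    rw [← e1, ← hd, h, ← neg_add]
    exact congrArg Neg.neg hd
  have hcancel := add_right_cancel heq
  have hz : (DirectSum.decompose (evenOdd Q) x 0 : CliffordAlgebra Q) = 0 := by
    have h2 : (2 : ℝ) • (DirectSum.decompose (evenOdd Q) x 0 : CliffordAlgebra Q) = 0 := by
      rw [two_smul]
      nth_rewrite 2 [hcancel]
      exact add_neg_cancel _
    rcases smul_eq_zero.mp h2 with h | h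
    · norm_num at h
    · exact h
  rw [hd, hz, zero_add]
  exact SetLike.coe_mem _

lemma isUnit_of_mul_scalar {x y : CliffordAlgebra Q} {c : ℝ} (hc : c ≠ 0)
    (hxy : x * y = algebraMap ℝ (CliffordAlgebra Q) c)
    (hyx : y * x = algebraMap ℝ (CliffordAlgebra Q) c) : IsUnit x := by
  refine ⟨⟨x, c⁻¹ • y, ?_, ?_⟩, rfl⟩
  · rw [mul_smul_comm, hxy, Algebra.smul_def, ← map_mul, inv_mul_cancel₀ hc, map_one]
  · rw [smul_mul_assoc, hyx, Algebra.smul_def, ← map_mul, inv_mul_cancel₀ hc, map_one]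

end Stmt12Aux


open Stmt12Aux in
/-- `A ∩ B = Q`: if both `reverse(T) * T` and `involute(reverse(T)) * T` are
invertible central elements, then `T ∈ Z^× (C^{×(0)} ∪ C^{×(1)})`. -/
theorem stmt12 (hQ : DiagQ Q) (hn : 2 ≤ n) (T : (CliffordAlgebra Q)ˣ)
    (h1 : reverse (Q := Q) (↑T : CliffordAlgebra Q) * ↑T ∈
      Subalgebra.center ℝ (CliffordAlgebra Q))
    (h2 : involute (reverse (Q := Q) (↑T : CliffordAlgebra Q)) * ↑T ∈
      Subalgebra.center ℝ (CliffordAlgebra Q)) :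
    (↑T : CliffordAlgebra Q) ∈ Pset Q := by
  classical
  have htu : IsUnit (↑T : CliffordAlgebra Q) := T.isUnit
  have hrtu : IsUnit (reverse (Q := Q) (↑T : CliffordAlgebra Q)) := by
    refine ⟨⟨reverse (Q := Q) (↑T : CliffordAlgebra Q),
      reverse (Q := Q) (↑T⁻¹ : CliffordAlgebra Q), ?_, ?_⟩, rfl⟩
    · rw [← reverse.map_mul, Units.inv_mul, reverse.map_one]
    · rw [← reverse.map_mul, Units.mul_inv, reverse.map_one]
  set z1 : CliffordAlgebra Q := reverse (Q := Q) (↑T : CliffordAlgebra Q) * ↑T with hz1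
  set z2 : CliffordAlgebra Q :=
    involute (reverse (Q := Q) (↑T : CliffordAlgebra Q)) * ↑T with hz2
  have hz1u : IsUnit z1 := hrtu.mul htu
  have hz2u : IsUnit z2 := (hrtu.map (involute (Q := Q))).mul htu
  have hcent1 := Subalgebra.mem_center_iff.mp h1
  have htrev : (↑T : CliffordAlgebra Q) * reverse (Q := Q) (↑T : CliffordAlgebra Q) = z1 := by
    refine htu.mul_right_cancel ?_
    have h := hcent1 (↑T : CliffordAlgebra Q)
    rw [hz1] at h ⊢
    rw [mul_assoc]
    exact h
  have hkey : involute (↑T : CliffordAlgebra Q) * z2 = involute z1 * ↑T := by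
    rw [hz2, ← mul_assoc, ← map_mul, htrev]
  -- the inverse of z2
  set z2i : CliffordAlgebra Q := (↑hz2u.unit⁻¹ : CliffordAlgebra Q) with hz2idef
  have hz2mul : z2 * z2i = 1 := hz2u.mul_val_inv
  have hz2ic : z2i ∈ Subalgebra.center ℝ (CliffordAlgebra Q) := by
    refine inv_mem_center ?_
    rw [hz2u.unit_spec]
    exact h2
  set W : CliffordAlgebra Q := involute z1 * z2i with hWdef
  have hWc : W ∈ Subalgebra.center ℝ (CliffordAlgebra Q) :=
    Subalgebra.mul_mem _ (involute_mem_center h1) hz2ic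
  have hWu : IsUnit W := (hz1u.map (involute (Q := Q))).mul (Units.isUnit _)
  have hW : involute (↑T : CliffordAlgebra Q) = W * ↑T := by
    have hstep : involute (↑T : CliffordAlgebra Q) * (z2 * z2i)
        = involute z1 * ↑T * z2i := by
      rw [← mul_assoc, hkey]
    rw [hz2mul, mul_one] at hstep
    rw [hstep, hWdef, mul_assoc, Subalgebra.mem_center_iff.mp hz2ic (↑T : CliffordAlgebra Q),
      ← mul_assoc]
  have hWW : involute W * W = 1 := by
    have h' := congrArg (involute (Q := Q)) hW
    rw [involute_involute, map_mul, hW] at h'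
    have h'' : involute W * W * (↑T : CliffordAlgebra Q) = 1 * ↑T := by
      rw [mul_assoc, one_mul]
      exact h'.symm
    exact htu.mul_right_cancel h''
  have hWcomm := Subalgebra.mem_center_iff.mp hWc
  have hWinvW : W * involute W = 1 := by
    rw [← hWcomm (involute W)]
    exact hWW
  -- W + involute W is a scalar
  have hYc : W + involute W ∈ Subalgebra.center ℝ (CliffordAlgebra Q) :=
    Subalgebra.add_mem _ hWc (involute_mem_center hWc)
  have hYi : involute (W + involute W) = W + involute W := by
    rw [map_add, involute_involute, add_comm]
  obtain ⟨r, hr⟩ := scalar_of_central_involute_fixed hQ hYc hYi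
  have prod1 : (1 + W) * (1 + involute W) = algebraMap ℝ (CliffordAlgebra Q) (2 + r) := by
    have e1 : (1 + W) * (1 + involute W) = 2 + (W + involute W) := by
      rw [mul_add, add_mul, add_mul, one_mul, one_mul, mul_one, hWinvW,
        ← one_add_one_eq_two]
      abel
    rw [e1, hr, map_add, map_ofNat]
  have prod1' : (1 + involute W) * (1 + W) = algebraMap ℝ (CliffordAlgebra Q) (2 + r) := by
    have e1 : (1 + involute W) * (1 + W) = 2 + (W + involute W) := by
      rw [mul_add, add_mul, add_mul, one_mul, one_mul, mul_one, hWW,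
        ← one_add_one_eq_two]
      abel
    rw [e1, hr, map_add, map_ofNat]
  have prod2 : (1 - W) * (1 - involute W) = algebraMap ℝ (CliffordAlgebra Q) (2 - r) := by
    have e1 : (1 - W) * (1 - involute W) = 2 - (W + involute W) := by
      rw [mul_sub, sub_mul, sub_mul, one_mul, one_mul, mul_one, hWinvW,
        ← one_add_one_eq_two]
      abel
    rw [e1, hr, map_sub, map_ofNat]
  have prod2' : (1 - involute W) * (1 - W) = algebraMap ℝ (CliffordAlgebra Q) (2 - r) := by
    have e1 : (1 - involute W) * (1 - W) = 2 - (W + involute W) := by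
      rw [mul_sub, sub_mul, sub_mul, one_mul, one_mul, mul_one, hWW,
        ← one_add_one_eq_two]
      abel
    rw [e1, hr, map_sub, map_ofNat]
  by_cases hc : (2 + r : ℝ) = 0
  · -- odd case: 1 - W is invertible
    have hc' : (2 - r : ℝ) ≠ 0 := by
      intro h
      have : r = -2 := by linarith
      rw [this] at h
      norm_num at h
    have hu : IsUnit (1 - W) := isUnit_of_mul_scalar hc' prod2 prod2'
    have hXi : involute ((1 - W) * (↑T : CliffordAlgebra Q)) = -((1 - W) * (↑T : CliffordAlgebra Q)) := by
      rw [map_mul, map_sub, map_one, hW, ← mul_assoc, sub_mul, one_mul, hWW,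
        ← neg_mul, neg_sub]
    refine ⟨(↑hu.unit⁻¹ : CliffordAlgebra Q), (1 - W) * (↑T : CliffordAlgebra Q), ?_, Units.isUnit _,
      Or.inr (mem_odd_of_involute_neg hXi), hu.mul htu, ?_⟩
    · refine inv_mem_center ?_
      rw [hu.unit_spec]
      exact Subalgebra.sub_mem _ (Subalgebra.one_mem _) hWc
    · rw [← mul_assoc, hu.val_inv_mul, one_mul]
  · -- even case: 1 + W is invertible
    have hu : IsUnit (1 + W) := isUnit_of_mul_scalar hc prod1 prod1'
    have hXi : involute ((1 + W) * (↑T : CliffordAlgebra Q)) = (1 + W) * (↑T : CliffordAlgebra Q) := by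
      rw [map_mul, map_add, map_one, hW, ← mul_assoc, add_mul, one_mul, hWW,
        add_comm W 1]
    refine ⟨(↑hu.unit⁻¹ : CliffordAlgebra Q), (1 + W) * (↑T : CliffordAlgebra Q), ?_, Units.isUnit _,
      Or.inl (mem_even_of_involute_fixed hXi), hu.mul htu, ?_⟩
    · refine inv_mem_center ?_
      rw [hu.unit_spec]
      exact Subalgebra.add_mem _ (Subalgebra.one_mem _) hWc
    · rw [← mul_assoc, hu.val_inv_mul, one_mul]
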